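/- Let T be a commutative K-algebra, g ∈ T, and I an ideal of T. If δ is a K-linear differential operator on T that preserves I (δ(I) ⊆ I), then the unique extension δ_g of δ to the localization T_g preserves the extended ideal I·T_g. -/
import Mathlib


/-- Grothendieck-style differential operators on a commutative ring, defined
inductively via commutators with multiplication operators. -/
def IsDiffOp (T : Type*) [CommRing T] : ℕ → (T → T) → Prop
  | 0, δ => ∃ a : T, ∀ x, δ x = a * x
  | m + 1, δ => (∀ x y, δ (x + y) = δ x + δ y) ∧
      ∀ s : T, IsDiffOp T m (fun x => δ (s * x) - s * δ x)

/-- **Lemma (log-preserving operators localize).**  Let `T` be a commutative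
`K`-algebra, `g ∈ T`, and `I` an ideal of `T`.  If `δ` is a `K`-linear differential
operator on `T` preserving `I` (i.e. `δ(I) ⊆ I`), then its extension `δ_g` to the
localization `T_g` preserves the extended ideal `I·T_g`. -/
theorem diffOp_localization_preserves_ideal
    {K : Type*} [Field K] {T : Type*} [CommRing T] [Algebra K T]
    (g : T) (I : Ideal T) {n : ℕ} (δ : T → T)
    (hδ : IsDiffOp T n δ)
    (hlin : ∀ (c : K) (x : T), δ (algebraMap K T c * x) = algebraMap K T c * δ x)
    (hI : ∀ x ∈ I, δ x ∈ I)
    (δg : Localization.Away g → Localization.Away g)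
    (hδg : ∃ m, IsDiffOp (Localization.Away g) m δg)
    (hext : ∀ x : T, δg (algebraMap T (Localization.Away g) x)
        = algebraMap T (Localization.Away g) (δ x)) :
    ∀ y ∈ I.map (algebraMap T (Localization.Away g)),
      δg y ∈ I.map (algebraMap T (Localization.Away g)) := by
  set f := algebraMap T (Localization.Away g) with hf
  set J := I.map f with hJ
  suffices H : ∀ m (ε : Localization.Away g → Localization.Away g),
      IsDiffOp (Localization.Away g) m ε →
      (∀ x ∈ I, ε (f x) ∈ J) →
      ∀ z ∈ J, ε z ∈ J by
    intro y hy
    obtain ⟨m, hm⟩ := hδg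
    exact H m δg hm (fun x hx => by rw [hext]; exact Ideal.mem_map_of_mem _ (hI x hx)) y hy
  intro m
  induction m with
  | zero =>
    intro ε hε hpre z hz
    obtain ⟨a, ha⟩ := hε
    rw [ha]
    exact Ideal.mul_mem_left _ _ hz
  | succ m ih =>
    intro ε hε hpre z hz
    obtain ⟨hadd, hcomm⟩ := hε
    have hz' := hz
    rw [hJ, IsLocalization.mem_map_algebraMap_iff (Submonoid.powers g)] at hz'
    obtain ⟨⟨x, s⟩, hx⟩ := hz'
    -- hx : z * f s = f x
    have hpre' : ∀ x' ∈ I, (fun w => ε ((f s) * w) - (f s) * ε w) (f x') ∈ J := by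
      intro x' hx'
      have h1 : f (s : T) * f x' = f ((s : T) * x') := (map_mul f (s : T) x').symm
      simp only [h1]
      exact Ideal.sub_mem _ (hpre _ (I.mul_mem_left (s : T) hx'))
        (Ideal.mul_mem_left _ _ (hpre _ hx'))
    have hcz : (fun w => ε ((f s) * w) - (f s) * ε w) z ∈ J :=
      ih _ (hcomm (f s)) hpre' z hz
    have h2 : ε (f s * z) ∈ J := by
      rw [mul_comm, hx]
      exact hpre _ x.2
    have h3 : f s * ε z ∈ J := by
      have : f s * ε z = ε (f s * z) - (ε (f s * z) - f s * ε z) := by ring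
      rw [this]
      exact Ideal.sub_mem _ h2 hcz
    have hu : IsUnit (f s) := IsLocalization.map_units (Localization.Away g) s
    obtain ⟨u, hu⟩ := hu
    have : ε z = ↑u⁻¹ * (f s * ε z) := by
      rw [← hu, ← mul_assoc, Units.inv_mul, one_mul]
    rw [this]
    exact Ideal.mul_mem_left _ _ h3
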